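/- Property P₁ (connectivity of the two solo vertices) is stable under composition of affine tasks: for tasks A on n = 3^ℓ and B on m = 3^{ℓ'} (ℓ, ℓ' ≥ 1), if vertices 0 and n are joined by a path of edges of A and vertices 0 and m are joined by a path of edges of B, then vertices 0 and n·m are joined by a path of edges of A⋆B. -/

import Mathlib

/-!
2-process affine tasks, modeled combinatorially.
The ℓ-th iterated standard chromatic subdivision of the 1-simplex is the path
graph on vertices `{0, …, n}`, `n = 3^ℓ`, whose edges are the pairs `{i, i+1}`
for `0 ≤ i < n`; vertex `i` has color `i % 2`, vertex `0` is the solo vertex of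
process `p₀` and vertex `n` the solo vertex of `p₁`.  An edge `{i, i+1}` is
encoded by its left endpoint `i`, and a 2-process affine task on `n` is a
nonempty finite set `A : Finset ℕ` of such edges (left endpoints `< n`).
-/

/-- `StepRel A x y`: the vertices `x` and `y` are joined by an edge of `A`
(the edge `{i, i+1}` being encoded by its left endpoint `i`). -/
def StepRel (A : Finset ℕ) (x y : ℕ) : Prop :=
  (y = x + 1 ∧ x ∈ A) ∨ (x = y + 1 ∧ y ∈ A)

/-- `P₁(A)`: the vertices `0` and `n` are joined by a path all of whose edges
lie in `A`. -/
def P1 (n : ℕ) (A : Finset ℕ) : Prop := Relation.ReflTransGen (StepRel A) 0 n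

/-- `P₂(A)`: the edge `{0, 1}` belongs to `A`. -/
def P2 (A : Finset ℕ) : Prop := 0 ∈ A

/-- `P₃(A)`: the edge `{n-1, n}` belongs to `A`. -/
def P3 (n : ℕ) (A : Finset ℕ) : Prop := n - 1 ∈ A

open Classical in
/-- The class of a 2-process affine task `A` on `{0,…,n}`:
`1` if `P₁(A)`; `2` if `¬P₁ ∧ P₂ ∧ P₃`; `3` if `¬P₁ ∧ P₂ ∧ ¬P₃`;
`4` if `¬P₁ ∧ ¬P₂ ∧ P₃`; `5` if `¬P₁ ∧ ¬P₂ ∧ ¬P₃`. -/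
noncomputable def classOf (n : ℕ) (A : Finset ℕ) : ℕ :=
  if P1 n A then 1
  else if P2 A then (if P3 n A then 2 else 3)
  else (if P3 n A then 4 else 5)

/-- The class order `⊑` on `{1, …, 5}`: `c ⊑ c'` iff `c = c'`, or `c = 1`,
or `c' = 5`, or (`c = 2` and `c' ∈ {3, 4}`). -/
def ClassLE (c c' : ℕ) : Prop :=
  c = c' ∨ c = 1 ∨ c' = 5 ∨ (c = 2 ∧ (c' = 3 ∨ c' = 4))

/-- The composition `A ⋆ B` of a task `A` on `{0,…,n}` with a task `B` on
`{0,…,m}`: each edge of `A` is replaced by an appropriately oriented copy of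
`B`; its edges are `{i·m + r, i·m + r + 1}` for `{i, i+1} ∈ A` and
`{j, j+1} ∈ B`, where `r = j` if `i` is even and `r = m - 1 - j` if `i` is odd
(edges encoded by left endpoints). -/
def comp (m : ℕ) (A B : Finset ℕ) : Finset ℕ :=
  (A ×ˢ B).image fun p => p.1 * m + (if Even p.1 then p.2 else m - 1 - p.2)

/-- `iterTask n A k` is the iterate `A^{⋆k}` (for `k ≥ 1`) of a task `A` on
`{0,…,n}`, a task on `{0,…,n^k}`: `A^{⋆1} = A`, `A^{⋆(k+1)} = A^{⋆k} ⋆ A`.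
(The value at `k = 0` is irrelevant and set to `A`.) -/
def iterTask (n : ℕ) (A : Finset ℕ) : ℕ → Finset ℕ
  | 0 => A
  | 1 => A
  | k + 2 => comp n (iterTask n A (k + 1)) A

/-- A chromatic carrier-preserving simplicial map `δ` from a task `A` on
`{0,…,n}` to the subdivided 1-simplex on `{0,…,m}`: `δ` maps `{0,…,n}` to
`{0,…,m}`; `δ i ≡ i (mod 2)` for every vertex incident to an edge of `A`;
`|δ (i+1) - δ i| = 1` for every edge `{i, i+1} ∈ A`; `δ 0 = 0` whenever
`{0,1} ∈ A`; and `δ n = m` whenever `{n-1, n} ∈ A`. -/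
def IsCCMap (n m : ℕ) (A : Finset ℕ) (δ : ℕ → ℕ) : Prop :=
  (∀ i ≤ n, δ i ≤ m) ∧
  (∀ i ∈ A, δ i % 2 = i % 2 ∧ δ (i + 1) % 2 = (i + 1) % 2) ∧
  (∀ i ∈ A, δ (i + 1) = δ i + 1 ∨ δ i = δ (i + 1) + 1) ∧
  (0 ∈ A → δ 0 = 0) ∧
  (n - 1 ∈ A → δ n = m)

/-- The image task `δ(A) = { {δ i, δ (i+1)} : {i, i+1} ∈ A }`
(edges encoded by left endpoints, i.e. by `min (δ i) (δ (i+1))`). -/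
def imageTask (A : Finset ℕ) (δ : ℕ → ℕ) : Finset ℕ :=
  A.image fun i => min (δ i) (δ (i + 1))

/-- `Solves m n B A`: the affine model `B*` of a task `B` on `{0,…,m}` solves
the task `A` on `{0,…,n}`, i.e. there exist `k ≥ 1` and a chromatic
carrier-preserving simplicial map `δ` from `B^{⋆k}` (a task on `{0,…,m^k}`)
to the subdivided 1-simplex on `{0,…,n}` with `δ(B^{⋆k}) ⊆ A`. -/
def Solves (m n : ℕ) (B A : Finset ℕ) : Prop :=
  ∃ k, 1 ≤ k ∧ ∃ δ : ℕ → ℕ,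
    IsCCMap (m ^ k) n (iterTask m B k) δ ∧ imageTask (iterTask m B k) δ ⊆ A


lemma stepRel_symm (A : Finset ℕ) : Symmetric (StepRel A) := by
  intro x y h
  rcases h with ⟨h1, h2⟩ | ⟨h1, h2⟩
  · exact Or.inr ⟨h1, h2⟩
  · exact Or.inl ⟨h1, h2⟩

lemma step_le (B : Finset ℕ) (m : ℕ) {x y : ℕ} (h : StepRel B x y)
    (hB : ∀ i ∈ B, i < m) (hx : x ≤ m) : y ≤ m := by
  rcases h with ⟨h1, h2⟩ | ⟨h1, h2⟩
  · exact h1 ▸ hB x h2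
  · have := hB y h2; omega

lemma mem_comp (m : ℕ) (A B : Finset ℕ) {i j : ℕ} (hi : i ∈ A) (hj : j ∈ B) :
    i * m + (if Even i then j else m - 1 - j) ∈ comp m A B := by
  apply Finset.mem_image.mpr
  exact ⟨(i, j), Finset.mem_product.mpr ⟨hi, hj⟩, rfl⟩

lemma step_lift (m : ℕ) (A B : Finset ℕ) (hB : ∀ i ∈ B, i < m)
    {i : ℕ} (hi : i ∈ A) {x y : ℕ} (h : StepRel B x y) (hx : x ≤ m) :
    StepRel (comp m A B)
      (i * m + (if Even i then x else m - x))
      (i * m + (if Even i then y else m - y)) := by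
  have hy : y ≤ m := step_le B m h hB hx
  by_cases he : Even i <;> simp only [he, if_true, if_false, if_pos, if_neg] <;>
    rcases h with ⟨h1, h2⟩ | ⟨h1, h2⟩
  · -- even, y = x+1, x ∈ B
    refine Or.inl ⟨by omega, ?_⟩
    have := mem_comp m A B hi h2
    simpa [he] using this
  · refine Or.inr ⟨by omega, ?_⟩
    have := mem_comp m A B hi h2
    simpa [he] using this
  · -- odd, y = x+1, x ∈ B
    have hxm : x < m := hB x h2
    refine Or.inr ⟨by omega, ?_⟩
    have := mem_comp m A B hi h2
    have heq : i * m + (m - y) = i * m + (m - 1 - x) := by omega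
    rw [heq]
    simpa [he] using this
  · have hym : y < m := hB y h2
    refine Or.inl ⟨by omega, ?_⟩
    have := mem_comp m A B hi h2
    have heq : i * m + (m - x) = i * m + (m - 1 - y) := by omega
    rw [heq]
    simpa [he] using this

lemma path_lift (m : ℕ) (A B : Finset ℕ) (hB : ∀ i ∈ B, i < m)
    {i : ℕ} (hi : i ∈ A) (hBp : P1 m B) :
    Relation.ReflTransGen (StepRel (comp m A B)) (i * m) ((i + 1) * m) := by
  have key : ∀ {x y : ℕ}, Relation.ReflTransGen (StepRel B) x y → x ≤ m →
      Relation.ReflTransGen (StepRel (comp m A B))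
        (i * m + (if Even i then x else m - x))
        (i * m + (if Even i then y else m - y)) := by
    intro x y h hx
    induction h with
    | refl => exact Relation.ReflTransGen.refl
    | tail h1 h2 ih =>
        rename_i b c
        have hb : b ≤ m := by
          clear ih h2
          induction h1 with
          | refl => exact hx
          | tail h1 h2 ih => exact step_le B m h2 hB ih
        exact ih.tail (step_lift m A B hB hi h2 hb)
  by_cases he : Even i
  · have := key hBp (Nat.zero_le m)
    simpa [he, add_one_mul] using this
  · have := key hBp (Nat.zero_le m)
    have h0 : i * m + (m - 0) = (i + 1) * m := by ring_nf; omega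
    have hm : i * m + (m - m) = i * m := by omega
    rw [if_neg he, if_neg he, h0, hm] at this
    exact (haveI : Std.Symm (StepRel (comp m A B)) := ⟨fun a b h => stepRel_symm _ h⟩; (Relation.ReflTransGen.stdSymm (r := StepRel (comp m A B)))).symm _ _ this

/-- `P₁` (connectivity of the two solo vertices) is stable under composition:
if `0` and `n` are joined by a path of edges of `A` and `0` and `m` are joined
by a path of edges of `B`, then `0` and `n·m` are joined by a path of edges of
`A⋆B`. -/
theorem P1_stable_comp
    (ℓ ℓ' n m : ℕ) (hℓ : 1 ≤ ℓ) (hℓ' : 1 ≤ ℓ') (hn : n = 3 ^ ℓ) (hm : m = 3 ^ ℓ')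
    (A B : Finset ℕ) (hAne : A.Nonempty) (hAlt : ∀ i ∈ A, i < n)
    (hBne : B.Nonempty) (hBlt : ∀ i ∈ B, i < m)
    (hA : P1 n A) (hB : P1 m B) :
    P1 (n * m) (comp m A B) := by
  rw [hn] at hA ⊢
  have symmC : Symmetric (Relation.ReflTransGen (StepRel (comp m A B))) := fun x y h => (haveI : Std.Symm (StepRel (comp m A B)) := ⟨fun a b h => stepRel_symm _ h⟩; (Relation.ReflTransGen.stdSymm (r := StepRel (comp m A B)))).symm x y h
  have main : ∀ {x y : ℕ}, Relation.ReflTransGen (StepRel A) x y →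
      Relation.ReflTransGen (StepRel (comp m A B)) (x * m) (y * m) := by
    intro x y h
    induction h with
    | refl => exact Relation.ReflTransGen.refl
    | tail h1 h2 ih =>
        rename_i b c
        rcases h2 with ⟨h1', h2'⟩ | ⟨h1', h2'⟩
        · exact ih.trans (h1' ▸ path_lift m A B hBlt h2' hB)
        · exact ih.trans (symmC (h1' ▸ path_lift m A B hBlt h2' hB))
  simpa [P1] using main hA
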